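/- Under the standing assumptions on φ and φ_λ, suppose in addition that h is sequentially weakly continuous on H. Then φ is sequentially weakly upper semicontinuous on H, and for every fixed λ > 0 the function φ_λ is sequentially weakly upper semicontinuous on H; that is, for every sequence x_n converging weakly to x, limsup_{n→∞} φ(x_n) ≤ φ(x) and limsup_{n→∞} φ_λ(x_n) ≤ φ_λ(x). (Theorem 3.1(d).) -/

import Mathlib

open Filter Topology MeasureTheory

/-- The Moreau envelope of a function `S : H × E → ℝ` (in two arguments) with parameter
`lam`, for the Hilbert norm of the product. -/
noncomputable def moreauEnv2 {H E : Type*} [NormedAddCommGroup H] [InnerProductSpace ℝ H]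
    [NormedAddCommGroup E] [InnerProductSpace ℝ E]
    (S : H → E → ℝ) (lam : ℝ) (x : H) (z : E) : ℝ :=
  ⨅ u : H × E, (S u.1 u.2 + (‖x - u.1‖ ^ 2 + ‖z - u.2‖ ^ 2) / (2 * lam))

/-- Weak (sequential) convergence in a Hilbert space: `⟪x_k, y⟫ → ⟪x₀, y⟫` for every `y`. -/
def WeakSeqTendsto {H : Type*} [NormedAddCommGroup H] [InnerProductSpace ℝ H]
    (x : ℕ → H) (x₀ : H) : Prop :=
  ∀ y : H, Tendsto (fun k => (inner ℝ (x k) y : ℝ)) atTop (𝓝 (inner ℝ x₀ y))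


section Aux

/-- Existence of a subgradient for a convex, upper semicontinuous real function
on a topological vector space. -/
theorem exists_subgradient_of_usc {E : Type*} [NormedAddCommGroup E] [NormedSpace ℝ E]
    (g : E → ℝ) (hg : ConvexOn ℝ Set.univ g) (husc : UpperSemicontinuous g) (x₀ : E) :
    ∃ F : E →L[ℝ] ℝ, ∀ x, g x₀ + F (x - x₀) ≤ g x := by
  set U : Set (E × ℝ) := {p | g p.1 < p.2} with hU
  have hUopen : IsOpen U := by
    rw [isOpen_iff_mem_nhds]
    rintro ⟨a, t⟩ (hat : g a < t)
    have h1 : g a < (g a + t) / 2 := by linarith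
    have h2 : (g a + t) / 2 < t := by linarith
    have hev := husc a _ h1
    rw [nhds_prod_eq]
    filter_upwards [Filter.prod_mem_prod hev (Ioi_mem_nhds h2)] with p hp
    exact lt_trans hp.1 (Set.mem_Ioi.mp hp.2)
  have hUconv : Convex ℝ U := by
    rintro ⟨a, s⟩ has ⟨b, t⟩ hbt c d hc hd hcd
    have := hg.2 (Set.mem_univ a) (Set.mem_univ b) hc hd hcd
    have hlt : c * g a + d * g b < c * s + d * t := by
      rcases eq_or_lt_of_le hc with rfl | hc'
      · simp only [zero_mul, zero_add]
        have hd1 : d = 1 := by linarith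
        have : g b < t := hbt
        nlinarith
      · rcases eq_or_lt_of_le hd with rfl | hd'
        · have hc1 : c = 1 := by linarith
          have : g a < s := has
          nlinarith
        · have h1 : g a < s := has
          have h2 : g b < t := hbt
          nlinarith
    exact lt_of_le_of_lt this hlt
  have hpt : (x₀, g x₀) ∉ U := by simp [hU]
  obtain ⟨f, hf⟩ := geometric_hahn_banach_open_point hUconv hUopen hpt
  set f₁ : E →L[ℝ] ℝ := f.comp (ContinuousLinearMap.inl ℝ E ℝ) with hf₁
  set c : ℝ := f (0, 1) with hcdef
  have hdecomp : ∀ p : E × ℝ, f p = f₁ p.1 + p.2 * c := by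
    intro p
    have h0 : f p = f (p.1, (0 : ℝ)) + f (p.2 • ((0 : E), (1 : ℝ))) := by
      rw [← f.map_add]
      congr 1
      simp [Prod.ext_iff]
    rw [h0, f.map_smul]
    simp only [hf₁, hcdef, ContinuousLinearMap.comp_apply, ContinuousLinearMap.inl_apply,
      smul_eq_mul]
  have hkey : ∀ x t, g x < t → f₁ x + t * c < f₁ x₀ + g x₀ * c := by
    intro x t hxt
    have := hf (x, t) hxt
    rwa [hdecomp, hdecomp] at this
  have hcneg : c < 0 := by
    have := hkey x₀ (g x₀ + 1) (by linarith)
    nlinarith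
  have hkey2 : ∀ x, f₁ x + g x * c ≤ f₁ x₀ + g x₀ * c := by
    intro x
    refine le_of_forall_pos_le_add fun ε hε => ?_
    have hs : (0 : ℝ) < ε / (-c) := div_pos hε (by linarith)
    have := hkey x (g x + ε / (-c)) (by linarith)
    have hc' : c ≠ 0 := by linarith
    have h3 : ε / (-c) * c = -ε := by
      field_simp
    rw [add_mul, h3] at this
    linarith
  refine ⟨(-c)⁻¹ • f₁, fun x => ?_⟩
  have hck : (0 : ℝ) < -c := by linarith
  have h1 := hkey2 x
  have : ((-c)⁻¹ • f₁) (x - x₀) = (-c)⁻¹ * (f₁ x - f₁ x₀) := by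
    simp [map_sub]
    ring
  rw [this]
  have h2 : (-c)⁻¹ * (f₁ x - f₁ x₀) ≤ g x - g x₀ := by
    rw [inv_mul_le_iff₀ hck]
    nlinarith
  linarith

/-- A continuous linear functional is sequentially weakly continuous. -/
theorem weakSeq_tendsto_clm {H : Type*} [NormedAddCommGroup H] [InnerProductSpace ℝ H]
    [CompleteSpace H] {x : ℕ → H} {x₀ : H} (hx : WeakSeqTendsto x x₀) (F : H →L[ℝ] ℝ) :
    Tendsto (fun n => F (x n)) atTop (𝓝 (F x₀)) := by
  set y : H := (InnerProductSpace.toDual ℝ H).symm F with hy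
  have hFy : ∀ u : H, F u = (inner ℝ u y : ℝ) := by
    intro u
    have : InnerProductSpace.toDual ℝ H y = F := by
      rw [hy]; exact (InnerProductSpace.toDual ℝ H).apply_symm_apply F
    rw [← this, InnerProductSpace.toDual_apply_apply, real_inner_comm]
  simp only [hFy]
  exact hx y

/-- Key lemma: a convex usc function is sequentially weakly lsc; in the frequently form. -/
theorem key_usc {H : Type*} [NormedAddCommGroup H] [InnerProductSpace ℝ H] [CompleteSpace H]
    (g : H → ℝ) (hg : ConvexOn ℝ Set.univ g) (husc : UpperSemicontinuous g)
    {x : ℕ → H} {x₀ : H} (hx : WeakSeqTendsto x x₀)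
    {b : ℕ → ℝ} {B : ℝ} (hb : Tendsto b atTop (𝓝 B))
    (hfreq : ∃ᶠ n in atTop, g (x n) ≤ b n) : g x₀ ≤ B := by
  obtain ⟨F, hF⟩ := exists_subgradient_of_usc g hg husc x₀
  have hFt : Tendsto (fun n => F (x n - x₀)) atTop (𝓝 0) := by
    have h1 := weakSeq_tendsto_clm hx F
    have h2 : Tendsto (fun n => F (x n) - F x₀) atTop (𝓝 (F x₀ - F x₀)) :=
      h1.sub tendsto_const_nhds
    rw [sub_self] at h2
    simpa [map_sub] using h2
  refine le_of_forall_pos_le_add fun ε hε => ?_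
  have ht : Tendsto (fun n => b n - F (x n - x₀)) atTop (𝓝 B) := by
    simpa using hb.sub hFt
  have hev : ∀ᶠ n in atTop, b n - F (x n - x₀) < B + ε :=
    ht.eventually_lt_const (by linarith)
  obtain ⟨n, hn1, hn2⟩ := (hfreq.and_eventually hev).exists
  have := hF (x n)
  linarith

/-- Reverse Fatou for probability-type measures, real-valued form. -/
theorem limsup_toReal_le_measure {Ω : Type*} [MeasurableSpace Ω] (P : Measure Ω)
    [IsProbabilityMeasure P] (A : ℕ → Set Ω) (hA : ∀ n, MeasurableSet (A n)) (A' : Set Ω)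
    (hsub : ∀ ω, (∀ n, ∃ k, n ≤ k ∧ ω ∈ A k) → ω ∈ A') :
    limsup (fun n => (P (A n)).toReal) atTop ≤ (P A').toReal := by
  set B : ℕ → Set Ω := fun n => ⋃ k, ⋃ _ : n ≤ k, A k with hB
  have hBm : ∀ n, MeasurableSet (B n) := fun n =>
    MeasurableSet.iUnion fun k => MeasurableSet.iUnion fun _ => hA k
  have hBanti : Antitone B := by
    intro i j hij
    refine Set.iUnion₂_subset fun k hk => ?_
    exact Set.subset_iUnion₂ (s := fun k _ => A k) k (le_trans hij hk)
  have hInt : (⋂ n, B n) ⊆ A' := by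
    intro ω hω
    refine hsub ω fun n => ?_
    have := Set.mem_iInter.1 hω n
    simp only [hB, Set.mem_iUnion] at this
    obtain ⟨k, hk, hmem⟩ := this
    exact ⟨k, hk, hmem⟩
  have htend : Tendsto (fun n => (P (B n)).toReal) atTop (𝓝 ((P (⋂ n, B n)).toReal)) := by
    have h1 : Tendsto (P ∘ B) atTop (𝓝 (P (⋂ n, B n))) :=
      tendsto_measure_iInter_atTop (fun n => (hBm n).nullMeasurableSet) hBanti
        ⟨0, measure_ne_top P _⟩
    exact (ENNReal.tendsto_toReal (measure_ne_top P _)).comp h1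
  have hle : limsup (fun n => (P (A n)).toReal) atTop ≤
      limsup (fun n => (P (B n)).toReal) atTop := by
    refine limsup_le_limsup (Eventually.of_forall fun n => ?_) ?_ ?_
    · exact ENNReal.toReal_mono (measure_ne_top P _)
        (measure_mono (Set.subset_iUnion₂ (s := fun k _ => A k) n le_rfl))
    · exact IsBoundedUnder.isCoboundedUnder_le
        ⟨0, eventually_map.2 (Eventually.of_forall fun n => ENNReal.toReal_nonneg)⟩
    · exact htend.isBoundedUnder_le
  calc limsup (fun n => (P (A n)).toReal) atTop
      ≤ limsup (fun n => (P (B n)).toReal) atTop := hle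
    _ = (P (⋂ n, B n)).toReal := htend.limsup_eq
    _ ≤ (P A').toReal := ENNReal.toReal_mono (measure_ne_top P _) (measure_mono hInt)

/-- Convexity inequality for the squared norm in an inner product space. -/
theorem norm_sq_combo_le {E : Type*} [NormedAddCommGroup E] [InnerProductSpace ℝ E]
    {a b : ℝ} (ha : 0 ≤ a) (hb : 0 ≤ b) (hab : a + b = 1) (p q : E) :
    ‖a • p + b • q‖ ^ 2 ≤ a * ‖p‖ ^ 2 + b * ‖q‖ ^ 2 := by
  have hexp : ‖a • p + b • q‖ ^ 2 =
      a ^ 2 * ‖p‖ ^ 2 + 2 * (a * (b * inner ℝ p q)) + b ^ 2 * ‖q‖ ^ 2 := by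
    rw [norm_add_sq_real, norm_smul, norm_smul, real_inner_smul_left, real_inner_smul_right]
    simp only [Real.norm_eq_abs, abs_of_nonneg ha, abs_of_nonneg hb, mul_pow]
    try ring
  have hcs := real_inner_le_norm p q
  nlinarith [sq_nonneg (‖p‖ - ‖q‖), mul_nonneg ha hb, norm_nonneg p, norm_nonneg q]

end Aux

set_option maxHeartbeats 1000000

/-- Theorem 3.1(d): if `h` is sequentially weakly continuous, then `φ` and each `φ_λ`
(`λ > 0`) are sequentially weakly upper semicontinuous on `H`. -/
theorem stmt8
    {H Y : Type*} [NormedAddCommGroup H] [InnerProductSpace ℝ H] [CompleteSpace H]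
    [SecondCountableTopology H]
    [NormedAddCommGroup Y] [NormedSpace ℝ Y] [CompleteSpace Y] {m : ℕ}
    {Ω : Type*} [MeasurableSpace Ω] (P : Measure Ω) [IsProbabilityMeasure P]
    (ξ : Ω → EuclideanSpace ℝ (Fin m)) (hξ : Measurable ξ)
    (hlaw : P.map ξ ≪ volume)
    (K : Set Y) (hKne : K.Nonempty) (hKcl : IsClosed K) (hKconv : Convex ℝ K)
    (hKcone : ∀ c : ℝ, 0 ≤ c → ∀ y ∈ K, c • y ∈ K)
    (C : Set (WeakDual ℝ Y)) (hCne : C.Nonempty) (hCconv : Convex ℝ C) (hCcpt : IsCompact C)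
    (hCgen : closure {w : WeakDual ℝ Y | ∃ c : ℝ, 0 ≤ c ∧ ∃ v ∈ C, w = c • v}
      = {w : WeakDual ℝ Y | ∀ y ∈ K, 0 ≤ w y})
    (Φ : H → EuclideanSpace ℝ (Fin m) → Y)
    (hΦ : Continuous fun q : H × EuclideanSpace ℝ (Fin m) => Φ q.1 q.2)
    (h : H → ℝ) (hconv : ConvexOn ℝ Set.univ h) (hC1 : ContDiff ℝ 1 h)
    (hscal : ∀ v ∈ C, ConvexOn ℝ Set.univ
      (fun q : H × EuclideanSpace ℝ (Fin m) => v (Φ q.1 q.2) + h q.1))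
    (S : H → EuclideanSpace ℝ (Fin m) → ℝ)
    (hS : ∀ x z, S x z = ⨆ v : C, ((v : WeakDual ℝ Y) (Φ x z) + h x))
    (φ : H → ℝ)
    (hφ : ∀ x, φ x = (P {ω | S x (ξ ω) ≤ h x}).toReal)
    (φl : ℝ → H → ℝ)
    (hφl : ∀ lam x, φl lam x = (P {ω | moreauEnv2 S lam x (ξ ω) ≤ h x}).toReal)
    (hwk : ∀ (x : ℕ → H) (x₀ : H), WeakSeqTendsto x x₀ →
      Tendsto (fun k => h (x k)) atTop (𝓝 (h x₀))) :
    ∀ (x : ℕ → H) (x₀ : H), WeakSeqTendsto x x₀ →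
      Filter.limsup (fun n => φ (x n)) atTop ≤ φ x₀ ∧
      (∀ lam : ℝ, 0 < lam → Filter.limsup (fun n => φl lam (x n)) atTop ≤ φl lam x₀) := by
  classical
  intro x x₀ hx
  haveI : Nonempty C := hCne.to_subtype
  have hvcont : ∀ v : WeakDual ℝ Y, Continuous fun y : Y => v y := fun v =>
    ContinuousLinearMap.continuous (v : Y →L[ℝ] ℝ)
  have hhcont : Continuous h := hC1.continuous
  have hME : ∀ (lam : ℝ) (w : H) (z : EuclideanSpace ℝ (Fin m)),
      moreauEnv2 S lam w z = ⨅ u : H × EuclideanSpace ℝ (Fin m),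
        (S u.1 u.2 + (‖w - u.1‖ ^ 2 + ‖z - u.2‖ ^ 2) / (2 * lam)) := fun _ _ _ => rfl
  have hbdd : ∀ (w : H) (z : EuclideanSpace ℝ (Fin m)),
      BddAbove (Set.range fun v : C => (v : WeakDual ℝ Y) (Φ w z) + h w) := by
    intro w z
    have hc : Continuous fun v : WeakDual ℝ Y => v (Φ w z) + h w :=
      (WeakDual.eval_continuous (Φ w z)).add continuous_const
    have himg := (hCcpt.image hc).bddAbove
    have hran : (Set.range fun v : C => (v : WeakDual ℝ Y) (Φ w z) + h w)
        = (fun v : WeakDual ℝ Y => v (Φ w z) + h w) '' C := by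
      ext r
      simp [Set.mem_image]
    rwa [hran]
  have hterm_le_S : ∀ (w : H) (z : EuclideanSpace ℝ (Fin m)) (v : C),
      (v : WeakDual ℝ Y) (Φ w z) + h w ≤ S w z := by
    intro w z v
    rw [hS]
    exact le_ciSup (hbdd w z) v
  have hS_le : ∀ (w : H) (z : EuclideanSpace ℝ (Fin m)) (c : ℝ),
      (∀ v : C, (v : WeakDual ℝ Y) (Φ w z) + h w ≤ c) → S w z ≤ c := by
    intro w z c hc
    rw [hS]
    exact ciSup_le hc
  -- joint convexity of S
  have hSconv : ConvexOn ℝ (Set.univ : Set (H × EuclideanSpace ℝ (Fin m)))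
      (fun q => S q.1 q.2) := by
    refine ⟨convex_univ, fun p _ q _ a b ha hb hab => ?_⟩
    simp only [smul_eq_mul]
    refine hS_le _ _ _ fun v => ?_
    have h1 := (hscal v v.2).2 (Set.mem_univ p) (Set.mem_univ q) ha hb hab
    simp only [smul_eq_mul] at h1
    have h4 : a * ((v : WeakDual ℝ Y) (Φ p.1 p.2) + h p.1) ≤ a * S p.1 p.2 :=
      mul_le_mul_of_nonneg_left (hterm_le_S p.1 p.2 v) ha
    have h5 : b * ((v : WeakDual ℝ Y) (Φ q.1 q.2) + h q.1) ≤ b * S q.1 q.2 :=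
      mul_le_mul_of_nonneg_left (hterm_le_S q.1 q.2 v) hb
    linarith
  -- affine minorant of S
  obtain ⟨v₀, hv₀⟩ := hCne
  have hg₀conv := hscal v₀ hv₀
  have hg₀cont : Continuous fun q : H × EuclideanSpace ℝ (Fin m) => v₀ (Φ q.1 q.2) + h q.1 :=
    ((hvcont v₀).comp hΦ).add (hhcont.comp continuous_fst)
  obtain ⟨F₀, hF₀⟩ := exists_subgradient_of_usc _ hg₀conv hg₀cont.upperSemicontinuous 0
  set c₀ : ℝ := v₀ (Φ (0 : H × EuclideanSpace ℝ (Fin m)).1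
      (0 : H × EuclideanSpace ℝ (Fin m)).2) + h (0 : H × EuclideanSpace ℝ (Fin m)).1 with hc₀
  have hSlow : ∀ u : H × EuclideanSpace ℝ (Fin m), c₀ + F₀ u ≤ S u.1 u.2 := by
    intro u
    have h1 := hF₀ u
    rw [sub_zero] at h1
    exact le_trans h1 (hterm_le_S u.1 u.2 ⟨v₀, hv₀⟩)
  set M : ℝ := ‖F₀‖ with hM
  have hM0 : 0 ≤ M := norm_nonneg _
  -- lower bound for the Moreau integrand
  have hMbdd : ∀ {lam : ℝ}, 0 < lam → ∀ (w : H) (z : EuclideanSpace ℝ (Fin m)),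
      BddBelow (Set.range fun u : H × EuclideanSpace ℝ (Fin m) =>
        S u.1 u.2 + (‖w - u.1‖ ^ 2 + ‖z - u.2‖ ^ 2) / (2 * lam)) := by
    intro lam hlam w z
    refine ⟨c₀ - M * ‖w‖ - M * ‖z‖ - M ^ 2 * lam, ?_⟩
    rintro r ⟨u, rfl⟩
    have hFu : -(M * (‖u.1‖ + ‖u.2‖)) ≤ F₀ u := by
      have h1 : ‖F₀ u‖ ≤ M * ‖u‖ := F₀.le_opNorm u
      rw [Real.norm_eq_abs] at h1
      have h2 : ‖u‖ ≤ ‖u.1‖ + ‖u.2‖ := by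
        rw [Prod.norm_def]
        exact max_le (le_add_of_nonneg_right (norm_nonneg _))
          (le_add_of_nonneg_left (norm_nonneg _))
      have h3 : M * ‖u‖ ≤ M * (‖u.1‖ + ‖u.2‖) := mul_le_mul_of_nonneg_left h2 hM0
      have h4 : -(|F₀ u|) ≤ F₀ u := neg_abs_le _
      linarith
    have hq1 : (‖u.1‖ - ‖w‖) ^ 2 ≤ ‖w - u.1‖ ^ 2 := by
      have h1 : |‖u.1‖ - ‖w‖| ≤ ‖u.1 - w‖ := abs_norm_sub_norm_le u.1 w
      rw [norm_sub_rev] at h1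
      calc (‖u.1‖ - ‖w‖) ^ 2 = |‖u.1‖ - ‖w‖| ^ 2 := (sq_abs _).symm
        _ ≤ ‖w - u.1‖ ^ 2 := pow_le_pow_left₀ (abs_nonneg _) h1 2
    have hq2 : (‖u.2‖ - ‖z‖) ^ 2 ≤ ‖z - u.2‖ ^ 2 := by
      have h1 : |‖u.2‖ - ‖z‖| ≤ ‖u.2 - z‖ := abs_norm_sub_norm_le u.2 z
      rw [norm_sub_rev] at h1
      calc (‖u.2‖ - ‖z‖) ^ 2 = |‖u.2‖ - ‖z‖| ^ 2 := (sq_abs _).symm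
        _ ≤ ‖z - u.2‖ ^ 2 := pow_le_pow_left₀ (abs_nonneg _) h1 2
    have quad : ∀ t a s : ℝ, (t - a) ^ 2 ≤ s →
        M * (t - a) - M ^ 2 * lam / 2 ≤ s / (2 * lam) := by
      intro t a s hs
      rw [le_div_iff₀ (by positivity)]
      nlinarith [sq_nonneg (t - a - M * lam)]
    have hqq1 := quad ‖u.1‖ ‖w‖ _ hq1
    have hqq2 := quad ‖u.2‖ ‖z‖ _ hq2
    have hSl := hSlow u
    show c₀ - M * ‖w‖ - M * ‖z‖ - M ^ 2 * lam
      ≤ S u.1 u.2 + (‖w - u.1‖ ^ 2 + ‖z - u.2‖ ^ 2) / (2 * lam)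
    rw [add_div]
    linarith
  -- convexity of the Moreau envelope in the first variable
  have hMconv : ∀ {lam : ℝ}, 0 < lam → ∀ z : EuclideanSpace ℝ (Fin m),
      ConvexOn ℝ (Set.univ : Set H) (fun w => moreauEnv2 S lam w z) := by
    intro lam hlam z
    refine ⟨convex_univ, fun x₁ _ x₂ _ a b ha hb hab => ?_⟩
    simp only [smul_eq_mul]
    show moreauEnv2 S lam (a • x₁ + b • x₂) z
      ≤ a * moreauEnv2 S lam x₁ z + b * moreauEnv2 S lam x₂ z
    refine le_of_forall_pos_le_add fun ε hε => ?_
    have he₁ : (⨅ u : H × EuclideanSpace ℝ (Fin m),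
        (S u.1 u.2 + (‖x₁ - u.1‖ ^ 2 + ‖z - u.2‖ ^ 2) / (2 * lam)))
        < moreauEnv2 S lam x₁ z + ε := by
      rw [← hME]
      exact lt_add_of_pos_right _ hε
    obtain ⟨u₁, hu₁⟩ := exists_lt_of_ciInf_lt he₁
    have he₂ : (⨅ u : H × EuclideanSpace ℝ (Fin m),
        (S u.1 u.2 + (‖x₂ - u.1‖ ^ 2 + ‖z - u.2‖ ^ 2) / (2 * lam)))
        < moreauEnv2 S lam x₂ z + ε := by
      rw [← hME]
      exact lt_add_of_pos_right _ hε
    obtain ⟨u₂, hu₂⟩ := exists_lt_of_ciInf_lt he₂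
    have hmix : moreauEnv2 S lam (a • x₁ + b • x₂) z ≤
        S (a • u₁ + b • u₂).1 (a • u₁ + b • u₂).2 +
          (‖(a • x₁ + b • x₂) - (a • u₁ + b • u₂).1‖ ^ 2 +
            ‖z - (a • u₁ + b • u₂).2‖ ^ 2) / (2 * lam) := by
      rw [hME]
      exact ciInf_le (hMbdd hlam _ z) (a • u₁ + b • u₂)
    have hx1 : (a • x₁ + b • x₂) - (a • u₁ + b • u₂).1
        = a • (x₁ - u₁.1) + b • (x₂ - u₂.1) := by
      simp only [Prod.fst_add, Prod.smul_fst]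
      rw [smul_sub, smul_sub]
      abel
    have hz1 : z - (a • u₁ + b • u₂).2 = a • (z - u₁.2) + b • (z - u₂.2) := by
      simp only [Prod.snd_add, Prod.smul_snd]
      have hzz : a • z + b • z = z := Convex.combo_self hab z
      calc z - (a • u₁.2 + b • u₂.2) = (a • z + b • z) - (a • u₁.2 + b • u₂.2) := by
            rw [hzz]
        _ = a • (z - u₁.2) + b • (z - u₂.2) := by
            rw [smul_sub, smul_sub]; abel
    have hn1 : ‖(a • x₁ + b • x₂) - (a • u₁ + b • u₂).1‖ ^ 2
        ≤ a * ‖x₁ - u₁.1‖ ^ 2 + b * ‖x₂ - u₂.1‖ ^ 2 := by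
      rw [hx1]; exact norm_sq_combo_le ha hb hab _ _
    have hn2 : ‖z - (a • u₁ + b • u₂).2‖ ^ 2
        ≤ a * ‖z - u₁.2‖ ^ 2 + b * ‖z - u₂.2‖ ^ 2 := by
      rw [hz1]; exact norm_sq_combo_le ha hb hab _ _
    have hSu : S (a • u₁ + b • u₂).1 (a • u₁ + b • u₂).2
        ≤ a * S u₁.1 u₁.2 + b * S u₂.1 u₂.2 := by
      have := hSconv.2 (Set.mem_univ u₁) (Set.mem_univ u₂) ha hb hab
      simpa only [smul_eq_mul] using this
    have hdiv : (‖(a • x₁ + b • x₂) - (a • u₁ + b • u₂).1‖ ^ 2 +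
          ‖z - (a • u₁ + b • u₂).2‖ ^ 2) / (2 * lam)
        ≤ a * ((‖x₁ - u₁.1‖ ^ 2 + ‖z - u₁.2‖ ^ 2) / (2 * lam))
          + b * ((‖x₂ - u₂.1‖ ^ 2 + ‖z - u₂.2‖ ^ 2) / (2 * lam)) := by
      have h2 : a * ((‖x₁ - u₁.1‖ ^ 2 + ‖z - u₁.2‖ ^ 2) / (2 * lam))
          + b * ((‖x₂ - u₂.1‖ ^ 2 + ‖z - u₂.2‖ ^ 2) / (2 * lam))
          = (a * (‖x₁ - u₁.1‖ ^ 2 + ‖z - u₁.2‖ ^ 2)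
            + b * (‖x₂ - u₂.1‖ ^ 2 + ‖z - u₂.2‖ ^ 2)) / (2 * lam) := by ring
      rw [h2, div_le_div_iff₀ (by positivity) (by positivity)]
      nlinarith [hn1, hn2, hlam]
    calc moreauEnv2 S lam (a • x₁ + b • x₂) z
        ≤ S (a • u₁ + b • u₂).1 (a • u₁ + b • u₂).2 +
          (‖(a • x₁ + b • x₂) - (a • u₁ + b • u₂).1‖ ^ 2 +
            ‖z - (a • u₁ + b • u₂).2‖ ^ 2) / (2 * lam) := hmix
      _ ≤ (a * S u₁.1 u₁.2 + b * S u₂.1 u₂.2) +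
          (a * ((‖x₁ - u₁.1‖ ^ 2 + ‖z - u₁.2‖ ^ 2) / (2 * lam))
            + b * ((‖x₂ - u₂.1‖ ^ 2 + ‖z - u₂.2‖ ^ 2) / (2 * lam))) := add_le_add hSu hdiv
      _ = a * (S u₁.1 u₁.2 + (‖x₁ - u₁.1‖ ^ 2 + ‖z - u₁.2‖ ^ 2) / (2 * lam))
          + b * (S u₂.1 u₂.2 + (‖x₂ - u₂.1‖ ^ 2 + ‖z - u₂.2‖ ^ 2) / (2 * lam)) := by ring
      _ ≤ a * (moreauEnv2 S lam x₁ z + ε) + b * (moreauEnv2 S lam x₂ z + ε) :=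
          add_le_add (mul_le_mul_of_nonneg_left hu₁.le ha)
            (mul_le_mul_of_nonneg_left hu₂.le hb)
      _ = a * moreauEnv2 S lam x₁ z + b * moreauEnv2 S lam x₂ z + ε := by
          rw [show a * (moreauEnv2 S lam x₁ z + ε) + b * (moreauEnv2 S lam x₂ z + ε)
            = a * moreauEnv2 S lam x₁ z + b * moreauEnv2 S lam x₂ z + (a + b) * ε from by ring,
            hab, one_mul]
  -- upper semicontinuity of the Moreau envelope in each variable
  have hMusc : ∀ {lam : ℝ}, 0 < lam → ∀ z : EuclideanSpace ℝ (Fin m),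
      UpperSemicontinuous (fun w : H => moreauEnv2 S lam w z) := by
    intro lam hlam z w₀ c hc
    have hc' : (⨅ u : H × EuclideanSpace ℝ (Fin m),
        (S u.1 u.2 + (‖w₀ - u.1‖ ^ 2 + ‖z - u.2‖ ^ 2) / (2 * lam))) < c := by
      rw [← hME]
      exact hc
    obtain ⟨u, hu⟩ := exists_lt_of_ciInf_lt hc'
    have hcont : Continuous fun w : H =>
        S u.1 u.2 + (‖w - u.1‖ ^ 2 + ‖z - u.2‖ ^ 2) / (2 * lam) := by
      apply continuous_const.add
      apply Continuous.div_const
      exact (((continuous_id.sub continuous_const).norm.pow 2).add continuous_const)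
    have hev : ∀ᶠ w in 𝓝 w₀,
        S u.1 u.2 + (‖w - u.1‖ ^ 2 + ‖z - u.2‖ ^ 2) / (2 * lam) < c :=
      (hcont.continuousAt (x := w₀)).eventually_lt_const hu
    filter_upwards [hev] with w hw
    have hle : moreauEnv2 S lam w z ≤
        S u.1 u.2 + (‖w - u.1‖ ^ 2 + ‖z - u.2‖ ^ 2) / (2 * lam) := by
      rw [hME]
      exact ciInf_le (hMbdd hlam w z) u
    exact lt_of_le_of_lt hle hw
  have hMusc_z : ∀ {lam : ℝ}, 0 < lam → ∀ w : H,
      UpperSemicontinuous (fun z : EuclideanSpace ℝ (Fin m) => moreauEnv2 S lam w z) := by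
    intro lam hlam w z₀ c hc
    have hc' : (⨅ u : H × EuclideanSpace ℝ (Fin m),
        (S u.1 u.2 + (‖w - u.1‖ ^ 2 + ‖z₀ - u.2‖ ^ 2) / (2 * lam))) < c := by
      rw [← hME]
      exact hc
    obtain ⟨u, hu⟩ := exists_lt_of_ciInf_lt hc'
    have hcont : Continuous fun z : EuclideanSpace ℝ (Fin m) =>
        S u.1 u.2 + (‖w - u.1‖ ^ 2 + ‖z - u.2‖ ^ 2) / (2 * lam) := by
      apply continuous_const.add
      apply Continuous.div_const
      exact (continuous_const.add ((continuous_id.sub continuous_const).norm.pow 2))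
    have hev : ∀ᶠ z in 𝓝 z₀,
        S u.1 u.2 + (‖w - u.1‖ ^ 2 + ‖z - u.2‖ ^ 2) / (2 * lam) < c :=
      (hcont.continuousAt (x := z₀)).eventually_lt_const hu
    filter_upwards [hev] with z hz
    have hle : moreauEnv2 S lam w z ≤
        S u.1 u.2 + (‖w - u.1‖ ^ 2 + ‖z - u.2‖ ^ 2) / (2 * lam) := by
      rw [hME]
      exact ciInf_le (hMbdd hlam w z) u
    exact lt_of_le_of_lt hle hz
  -- measurability of the relevant sets
  have hmeas1 : ∀ w : H, MeasurableSet {ω | S w (ξ ω) ≤ h w} := by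
    intro w
    have hlsc : LowerSemicontinuous fun z : EuclideanSpace ℝ (Fin m) => S w z := by
      have heq : (fun z : EuclideanSpace ℝ (Fin m) => S w z)
          = fun z => ⨆ v : C, ((v : WeakDual ℝ Y) (Φ w z) + h w) := funext (hS w)
      rw [heq]
      refine lowerSemicontinuous_ciSup (fun z => hbdd w z) fun v => ?_
      exact Continuous.lowerSemicontinuous
        (((hvcont v).comp (hΦ.comp (Continuous.prodMk_right w))).add continuous_const)
    have heq2 : {ω | S w (ξ ω) ≤ h w} = ξ ⁻¹' {z | S w z ≤ h w} := rfl
    rw [heq2]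
    exact hξ (measurableSet_le hlsc.measurable measurable_const)
  have hmeas2 : ∀ {lam : ℝ}, 0 < lam → ∀ w : H,
      MeasurableSet {ω | moreauEnv2 S lam w (ξ ω) ≤ h w} := by
    intro lam hlam w
    have heq2 : {ω | moreauEnv2 S lam w (ξ ω) ≤ h w}
        = ξ ⁻¹' {z | moreauEnv2 S lam w z ≤ h w} := rfl
    rw [heq2]
    exact hξ (measurableSet_le (hMusc_z hlam w).measurable measurable_const)
  have hhlim := hwk x x₀ hx
  constructor
  · -- part 1
    simp only [hφ]
    refine limsup_toReal_le_measure P (fun n => {ω | S (x n) (ξ ω) ≤ h (x n)})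
      (fun n => hmeas1 (x n)) _ ?_
    intro ω hω
    show S x₀ (ξ ω) ≤ h x₀
    refine hS_le x₀ (ξ ω) _ fun v => ?_
    set z := ξ ω with hz
    have hgconv : ConvexOn ℝ (Set.univ : Set H)
        (fun w => (v : WeakDual ℝ Y) (Φ w z) + h w) := by
      refine ⟨convex_univ, fun p _ q _ a b ha hb hab => ?_⟩
      have h1 := (hscal v v.2).2 (Set.mem_univ (p, z)) (Set.mem_univ (q, z)) ha hb hab
      simp only [Prod.smul_mk, Prod.mk_add_mk, smul_eq_mul] at h1 ⊢
      rwa [Convex.combo_self hab z] at h1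
    have hgcont : Continuous fun w : H => (v : WeakDual ℝ Y) (Φ w z) + h w := by
      refine Continuous.add ?_ hhcont
      exact (hvcont v).comp (hΦ.comp (continuous_id.prodMk continuous_const))
    refine key_usc _ hgconv hgcont.upperSemicontinuous hx hhlim ?_
    rw [frequently_atTop]
    intro n
    obtain ⟨k, hk, hky⟩ := hω n
    exact ⟨k, hk, le_trans (hterm_le_S (x k) z v) hky⟩
  · -- part 2
    intro lam hlam
    simp only [hφl]
    refine limsup_toReal_le_measure P
      (fun n => {ω | moreauEnv2 S lam (x n) (ξ ω) ≤ h (x n)})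
      (fun n => hmeas2 hlam (x n)) _ ?_
    intro ω hω
    show moreauEnv2 S lam x₀ (ξ ω) ≤ h x₀
    refine key_usc _ (hMconv hlam (ξ ω)) (hMusc hlam (ξ ω)) hx hhlim ?_
    rw [frequently_atTop]
    intro n
    obtain ⟨k, hk, hky⟩ := hω n
    exact ⟨k, hk, hky⟩
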